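/- Let A be an n-dimensional nilpotent left Leibniz algebra over ℂ with dim A² = n − k, dim Leib(A) = 1, dim A³ = t, and suppose Leib(A) ⊆ A³. Then n ≤ t + (k² + k)/2. -/

import Mathlib

/-- The left Leibniz identity for a bilinear bracket:
`[a,[b,c]] = [[a,b],c] + [b,[a,c]]`. -/
def IsLeibnizBracket {K A : Type*} [CommRing K] [AddCommGroup A] [Module K A]
    (br : A →ₗ[K] A →ₗ[K] A) : Prop :=
  ∀ a b c : A, br a (br b c) = br (br a b) c + br b (br a c)

/-- The span of all brackets `[s,t]` with `s ∈ S`, `t ∈ T`. -/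
def bracketSpan {K A : Type*} [CommRing K] [AddCommGroup A] [Module K A]
    (br : A →ₗ[K] A →ₗ[K] A) (S T : Submodule K A) : Submodule K A :=
  Submodule.span K {x | ∃ s ∈ S, ∃ t ∈ T, br s t = x}

/-- Lower central series: `lcs br n = A^(n+1)`, i.e. `lcs br 0 = A¹ = A` and
`lcs br (n+1) = [A, lcs br n]`. -/
def lcs {K A : Type*} [CommRing K] [AddCommGroup A] [Module K A]
    (br : A →ₗ[K] A →ₗ[K] A) : ℕ → Submodule K A
  | 0 => ⊤
  | n + 1 => bracketSpan br ⊤ (lcs br n)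

/-- `Leib(A)`: the span of all squares `[a,a]`. -/
def leibIdeal {K A : Type*} [CommRing K] [AddCommGroup A] [Module K A]
    (br : A →ₗ[K] A →ₗ[K] A) : Submodule K A :=
  Submodule.span K {x | ∃ a : A, br a a = x}

/-- The center `Z(A) = {x : [a,x] = 0 = [x,a] for all a}`. -/
def leibnizCenter {K A : Type*} [CommRing K] [AddCommGroup A] [Module K A]
    (br : A →ₗ[K] A →ₗ[K] A) : Submodule K A where
  carrier := {x | ∀ a : A, br a x = 0 ∧ br x a = 0}
  add_mem' := by
    intro x y hx hy a
    constructor <;>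
      simp [map_add, LinearMap.add_apply, (hx a).1, (hx a).2, (hy a).1, (hy a).2]
  zero_mem' := by
    intro a
    constructor <;> simp
  smul_mem' := by
    intro c x hx a
    constructor <;>
      simp [map_smul, LinearMap.smul_apply, (hx a).1, (hx a).2]

/-- Two-sided ideal of a Leibniz algebra. -/
def IsLeibnizIdeal {K A : Type*} [CommRing K] [AddCommGroup A] [Module K A]
    (br : A →ₗ[K] A →ₗ[K] A) (I : Submodule K A) : Prop :=
  ∀ a : A, ∀ x ∈ I, br a x ∈ I ∧ br x a ∈ I

/-- If `A` is an `n`-dimensional nilpotent left Leibniz algebra over `ℂ` with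
`dim A² = n - k`, `dim Leib(A) = 1`, `dim A³ = t` and `Leib(A) ⊆ A³`, then
`n ≤ t + (k² + k)/2`. -/
theorem dim_le_of_derived_codim_leib_in_third
    {A : Type*} [AddCommGroup A] [Module ℂ A] [FiniteDimensional ℂ A]
    (br : A →ₗ[ℂ] A →ₗ[ℂ] A) (hbr : IsLeibnizBracket br)
    (hnil : ∃ m : ℕ, lcs br m = ⊥)
    (n k t : ℕ) (hk : k ≤ n)
    (hdim : Module.finrank ℂ A = n)
    (hA2 : Module.finrank ℂ ↥(lcs br 1) = n - k)
    (hleib : Module.finrank ℂ ↥(leibIdeal br) = 1)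
    (hA3 : Module.finrank ℂ ↥(lcs br 2) = t)
    (hsub : leibIdeal br ≤ lcs br 2) :
    2 * n ≤ 2 * t + k ^ 2 + k := by
  classical
  set L1 := lcs br 1 with hL1
  set L2 := lcs br 2 with hL2
  -- basic membership lemmas
  have hgen1 : ∀ u v : A, br u v ∈ L1 := by
    intro u v
    exact Submodule.subset_span ⟨u, trivial, v, trivial, rfl⟩
  have hA : ∀ (a y : A), y ∈ L1 → br a y ∈ L2 := by
    intro a y hy
    exact Submodule.subset_span ⟨a, trivial, y, hy, rfl⟩
  have hB : ∀ y ∈ L1, ∀ b : A, br y b ∈ L2 := by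
    intro y hy b
    have : L1 ≤ LinearMap.ker (L2.mkQ.comp (br.flip b)) := by
      rw [hL1]
      show bracketSpan br ⊤ ⊤ ≤ _
      rw [bracketSpan, Submodule.span_le]
      rintro x ⟨u, -, v, -, rfl⟩
      simp only [SetLike.mem_coe, LinearMap.mem_ker, LinearMap.comp_apply,
        LinearMap.flip_apply, Submodule.mkQ_apply, Submodule.Quotient.mk_eq_zero]
      have heq : br (br u v) b = br u (br v b) - br v (br u b) :=
        eq_sub_of_add_eq (hbr u v b).symm
      rw [heq]
      exact sub_mem (hA u _ (hgen1 v b)) (hA v _ (hgen1 u b))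
    have := this hy
    simpa only [LinearMap.mem_ker, LinearMap.comp_apply, LinearMap.flip_apply,
      Submodule.mkQ_apply, Submodule.Quotient.mk_eq_zero] using this
  have hC : ∀ a : A, br a a ∈ L2 := fun a => hsub (Submodule.subset_span ⟨a, rfl⟩)
  have hD : ∀ a b : A, br a b + br b a ∈ L2 := by
    intro a b
    have h1 := hC (a + b)
    have h2 : br (a + b) (a + b) = br a a + (br a b + br b a) + br b b := by
      simp only [map_add, LinearMap.add_apply]; abel
    rw [h2] at h1
    have := sub_mem (sub_mem h1 (hC b)) (hC a)
    simpa using this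
  have hL21 : L2 ≤ L1 := by
    rw [hL2]
    show bracketSpan br ⊤ L1 ≤ L1
    rw [bracketSpan, Submodule.span_le]
    rintro x ⟨u, -, v, -, rfl⟩
    exact hgen1 u v
  -- quotient by L2 and the image of L1
  set π : A →ₗ[ℂ] A ⧸ L2 := L2.mkQ with hπ
  -- dimension of A/L1 is k
  have hqk : Module.finrank ℂ (A ⧸ L1) = k := by
    have := Submodule.finrank_quotient_add_finrank L1
    rw [hA2, hdim] at this
    omega
  -- basis of A/L1 and lifts
  obtain ⟨b⟩ : Nonempty (Module.Basis (Fin k) ℂ (A ⧸ L1)) :=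
    ⟨Module.finBasisOfFinrankEq ℂ _ hqk⟩
  have hsurj := L1.mkQ_surjective
  choose lift hlift using hsurj
  set e : Fin k → A := fun i => lift (b i) with he
  have hdec : ∀ s : A, s - ∑ i, (b.repr (L1.mkQ s)) i • e i ∈ L1 := by
    intro s
    have h0 : L1.mkQ (s - ∑ i, (b.repr (L1.mkQ s)) i • e i) = 0 := by
      rw [map_sub, map_sum]
      simp only [map_smul, he, hlift]
      rw [b.sum_repr (L1.mkQ s), sub_self]
    rwa [← LinearMap.mem_ker, Submodule.ker_mkQ] at h0
  -- the index type and spanning family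
  set g : (Σ j : Fin k, Fin j.val) → A ⧸ L2 :=
    fun p => π (br (e ⟨p.2.val, lt_trans p.2.isLt p.1.isLt⟩) (e p.1)) with hg
  set S : Submodule ℂ (A ⧸ L2) := Submodule.span ℂ (Set.range g) with hS
  have hpair_lt : ∀ i j : Fin k, i < j → π (br (e i) (e j)) ∈ S := by
    intro i j hij
    apply Submodule.subset_span
    refine ⟨⟨j, ⟨i.val, hij⟩⟩, ?_⟩
    simp [hg]
  have hpair : ∀ i j : Fin k, π (br (e i) (e j)) ∈ S := by
    intro i j
    rcases lt_trichotomy i j with h | h | h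
    · exact hpair_lt i j h
    · subst h
      have : π (br (e i) (e i)) = 0 := by
        simpa only [hπ, Submodule.mkQ_apply, Submodule.Quotient.mk_eq_zero] using hC (e i)
      rw [this]; exact zero_mem S
    · have hsum : π (br (e i) (e j)) + π (br (e j) (e i)) = 0 := by
        rw [← map_add]
        simpa only [hπ, Submodule.mkQ_apply, Submodule.Quotient.mk_eq_zero] using hD (e i) (e j)
      rw [eq_neg_of_add_eq_zero_left hsum]
      exact neg_mem (hpair_lt j i h)
  -- every bracket lands in S mod L2
  have hkey : ∀ s u : A, π (br s u) ∈ S := by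
    intro s u
    have hs' := hdec s
    have ht' := hdec u
    set c := b.repr (L1.mkQ s) with hc
    set d := b.repr (L1.mkQ u) with hd
    set p := ∑ i, c i • e i with hp
    set q := ∑ i, d i • e i with hq
    have hdiff : br s u - br p q ∈ L2 := by
      have hx : br s u - br p q = br (s - p) u + br p (u - q) := by
        simp only [map_sub, LinearMap.sub_apply]; abel
      rw [hx]
      exact add_mem (hB _ hs' u) (hA p _ ht')
    have heq : π (br s u) = π (br p q) := by
      rw [← sub_eq_zero, ← map_sub]
      simpa only [hπ, Submodule.mkQ_apply, Submodule.Quotient.mk_eq_zero] using hdiff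
    rw [heq]
    have hexp : br p q = ∑ i, ∑ j, (c i * d j) • br (e i) (e j) := by
      rw [hp, hq]
      simp only [map_sum, map_smul, LinearMap.sum_apply, LinearMap.smul_apply,
        Finset.smul_sum, smul_smul]
      rw [Finset.sum_comm]
      simp [mul_comm]
    rw [hexp, map_sum]
    refine Submodule.sum_mem _ fun i _ => ?_
    rw [map_sum]
    refine Submodule.sum_mem _ fun j _ => ?_
    rw [map_smul]
    exact Submodule.smul_mem _ _ (hpair i j)
  -- the image of L1 in A/L2 is contained in S
  have hM : Submodule.map π L1 ≤ S := by
    rw [hL1]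
    show Submodule.map π (bracketSpan br ⊤ ⊤) ≤ S
    rw [bracketSpan, Submodule.map_span, Submodule.span_le]
    rintro x ⟨y, ⟨u, -, v, -, rfl⟩, rfl⟩
    exact hkey u v
  -- dimension count for the image of L1
  have hfr : Module.finrank ℂ (Submodule.map π L1) + t = n - k := by
    set f : L1 →ₗ[ℂ] A ⧸ L2 := π.comp L1.subtype with hf
    have hrange : LinearMap.range f = Submodule.map π L1 := by
      rw [hf, LinearMap.range_comp, Submodule.range_subtype]
    have hker : LinearMap.ker f = Submodule.comap L1.subtype L2 := by
      ext x
      simp [hf, hπ, Submodule.Quotient.mk_eq_zero]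
    have hkerdim : Module.finrank ℂ (LinearMap.ker f) = t := by
      rw [hker, ← hA3]
      exact LinearEquiv.finrank_eq (Submodule.comapSubtypeEquivOfLe hL21)
    have h := LinearMap.finrank_range_add_finrank_ker f
    rw [hrange, hkerdim, hA2] at h
    exact h
  have hMS : Module.finrank ℂ (Submodule.map π L1) ≤ Module.finrank ℂ S :=
    Submodule.finrank_mono hM
  have hScard : Module.finrank ℂ S ≤ Fintype.card (Σ j : Fin k, Fin j.val) := by
    rw [hS]
    simpa [Set.finrank] using finrank_range_le_card (R := ℂ) g
  have hcard : 2 * Fintype.card (Σ j : Fin k, Fin j.val) = k * k - k := by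
    rw [Fintype.card_sigma]
    simp only [Fintype.card_fin]
    rw [Fin.sum_univ_eq_sum_range (fun i => i) k]
    have h1 := Finset.sum_range_id_mul_two k
    have h2 : k * (k - 1) = k * k - k := by
      cases k with
      | zero => simp
      | succ m =>
        have : (m + 1) * (m + 1) = (m + 1) * m + (m + 1) := by ring
        simp only [Nat.succ_sub_one]
        omega
    omega
  have hkk : k ≤ k * k := by
    rcases Nat.eq_zero_or_pos k with h | h
    · simp [h]
    · exact Nat.le_mul_of_pos_left k h
  rw [pow_two]
  obtain ⟨K, hK⟩ : ∃ K, k * k = K := ⟨_, rfl⟩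
  rw [hK] at hcard hkk ⊢
  omega
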